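/- Let f ∈ F_q[T] be a monic polynomial of degree n. Then f = A² + T·B² for some A, B ∈ F_q[T] if and only if every monic irreducible polynomial Q ∈ F_q[T] with χ_q(Q(0)) = −1 divides f with even multiplicity. -/

import Mathlib

open Polynomial


variable {F : Type} [Field F]

lemma sqX_eq_zero {A B : F[X]} (h : A ^ 2 + X * B ^ 2 = 0) : A = 0 ∧ B = 0 := by
  by_cases hB : B = 0
  · subst hB
    have h2 : A ^ 2 = 0 := by simpa using h
    exact ⟨pow_eq_zero_iff (two_ne_zero) |>.1 h2, rfl⟩
  · exfalso
    have hA : A ≠ 0 := by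
      rintro rfl
      have h3 : X * B ^ 2 = 0 := by simpa using h
      rcases mul_eq_zero.1 h3 with h1 | h1
      · exact X_ne_zero h1
      · exact hB (pow_eq_zero_iff two_ne_zero |>.1 h1)
    have h2 : A ^ 2 = -(X * B ^ 2) := by linear_combination h
    have hdeg : (A ^ 2).natDegree = (X * B ^ 2).natDegree := by
      rw [h2, natDegree_neg]
    rw [natDegree_pow, natDegree_mul X_ne_zero (pow_ne_zero 2 hB), natDegree_pow,
      natDegree_X] at hdeg
    omega

lemma brahmagupta (A B a b : F[X]) :
    (A ^ 2 + X * B ^ 2) * (a ^ 2 + X * b ^ 2)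
      = (A * a + X * B * b) ^ 2 + X * (A * b - B * a) ^ 2 := by ring

lemma lc_sqX {A B : F[X]} (h : A ^ 2 + X * B ^ 2 ≠ 0) :
    ∃ e : F, e ≠ 0 ∧ (A ^ 2 + X * B ^ 2).leadingCoeff = e ^ 2 := by
  by_cases hB : B = 0
  · have hA : A ≠ 0 := by rintro rfl; simp [hB] at h
    refine ⟨A.leadingCoeff, leadingCoeff_ne_zero.2 hA, ?_⟩
    simp [hB, leadingCoeff_pow]
  by_cases hA : A = 0
  · refine ⟨B.leadingCoeff, leadingCoeff_ne_zero.2 hB, ?_⟩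
    simp [hA, leadingCoeff_mul, leadingCoeff_pow]
  have dA : (A ^ 2).degree = ((2 * A.natDegree : ℕ) : WithBot ℕ) := by
    rw [degree_pow, degree_eq_natDegree hA]; push_cast; ring
  have dB : (X * B ^ 2).degree = ((2 * B.natDegree + 1 : ℕ) : WithBot ℕ) := by
    rw [degree_mul, degree_pow, degree_X, degree_eq_natDegree hB]; push_cast; ring
  rcases lt_trichotomy (2 * A.natDegree) (2 * B.natDegree + 1) with hlt | heq | hgt
  · refine ⟨B.leadingCoeff, leadingCoeff_ne_zero.2 hB, ?_⟩
    rw [leadingCoeff_add_of_degree_lt (by rw [dA, dB]; exact_mod_cast hlt),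
      leadingCoeff_mul, leadingCoeff_X, leadingCoeff_pow, one_mul]
  · omega
  · refine ⟨A.leadingCoeff, leadingCoeff_ne_zero.2 hA, ?_⟩
    rw [leadingCoeff_add_of_degree_lt' (by rw [dA, dB]; exact_mod_cast hgt), leadingCoeff_pow]

lemma geom_sum_nat (m d : ℕ) : (∑ i ∈ Finset.range d, (m + 1) ^ i) * m + 1 = (m + 1) ^ d := by
  induction d with
  | zero => simp
  | succ d ih =>
    rw [Finset.sum_range_succ, pow_succ]
    calc (∑ i ∈ Finset.range d, (m + 1) ^ i + (m + 1) ^ d) * m + 1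
        = ((∑ i ∈ Finset.range d, (m + 1) ^ i) * m + 1) + (m + 1) ^ d * m := by ring
      _ = (m + 1) ^ d + (m + 1) ^ d * m := by rw [ih]
      _ = (m + 1) ^ d * (m + 1) := by ring

lemma geom_sum_parity (q d : ℕ) (hq : Odd q) :
    (∑ i ∈ Finset.range d, q ^ i) % 2 = d % 2 := by
  induction d with
  | zero => simp
  | succ d ih =>
    rw [Finset.sum_range_succ]
    have : q ^ d % 2 = 1 := Nat.odd_iff.1 (hq.pow)
    omega

lemma neg_one_pow_parity {M : Type*} [Monoid M] [HasDistribNeg M] {a b : ℕ}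
    (h : a % 2 = b % 2) : (-1 : M) ^ a = (-1) ^ b := by
  conv_lhs => rw [← Nat.div_add_mod a 2]
  conv_rhs => rw [← Nat.div_add_mod b 2]
  rw [pow_add, pow_add, pow_mul, pow_mul, neg_one_sq, one_pow, one_pow, h]

set_option maxRecDepth 8000 in
set_option maxHeartbeats 1000000 in
lemma key_iff {F : Type} [Field F] [Fintype F] [DecidableEq F] (hq : Odd (Fintype.card F))
    (Q : F[X]) (hQm : Q.Monic) (hirr : Irreducible Q) (h0 : Q.eval 0 ≠ 0) :
    (∃ s : F[X], Q ∣ s ^ 2 + X) ↔ IsSquare (Q.eval 0) := by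
  classical
  haveI : Fact (Irreducible Q) := ⟨hirr⟩
  set q := Fintype.card F with hqdef
  have hq1 : 1 < q := Fintype.one_lt_card
  set d := Q.natDegree with hddef
  have hd : 0 < d := hirr.natDegree_pos
  set K := AdjoinRoot Q with hKdef
  set x : K := AdjoinRoot.root Q with hxdef
  let pb := AdjoinRoot.powerBasis hQm.ne_zero
  haveI : Finite K := Finite.of_equiv _ pb.basis.equivFun.toEquiv.symm
  haveI : Fintype K := Fintype.ofFinite K
  have cardK : Fintype.card K = q ^ d := by
    rw [Module.card_fintype pb.basis, Fintype.card_fin]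
    rfl
  obtain ⟨p, hp⟩ := CharP.exists F
  haveI : CharP F p := hp
  obtain ⟨r, hpp, hqpr⟩ := FiniteField.card F p
  haveI : Fact p.Prime := ⟨hpp⟩
  have hFK : Function.Injective (algebraMap F K) := (algebraMap F K).injective
  haveI : CharP K p := charP_of_injective_algebraMap hFK p
  -- Frobenius powers as `F`-algebra homomorphisms
  have hcomm : ∀ (m : ℕ) (c : F),
      (iterateFrobenius K p (r * m)) (algebraMap F K c) = algebraMap F K c := by
    intro m c
    rw [iterateFrobenius_def, ← map_pow, pow_mul, ← hqpr, FiniteField.pow_card_pow]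
  let ψ : ℕ → (K →ₐ[F] K) := fun m =>
    { iterateFrobenius K p (r * m) with commutes' := hcomm m }
  have hψ : ∀ (m : ℕ) (y : K), ψ m y = y ^ q ^ m := by
    intro m y
    show iterateFrobenius K p (r * m) y = _
    rw [iterateFrobenius_def, pow_mul, ← hqpr]
  -- every Frobenius iterate of `x` is a root of `Q` (mapped to `K`)
  have haev : ∀ m : ℕ, aeval (x ^ q ^ m) Q = 0 := by
    intro m
    rw [← hψ m x, Polynomial.aeval_algHom_apply (ψ m) x Q]
    have : aeval x Q = 0 := by
      rw [hxdef, AdjoinRoot.aeval_eq, AdjoinRoot.mk_self]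
    rw [this, map_zero]
  have hroot : ∀ m : ℕ, (Q.map (algebraMap F K)).IsRoot (x ^ q ^ m) := by
    intro m
    have := haev m
    rwa [Polynomial.aeval_def, ← Polynomial.eval_map] at this
  have hall : ∀ y : K, y ^ q ^ d = y := by
    intro y
    rw [← cardK]
    exact FiniteField.pow_card y
  -- distinctness of the Frobenius orbit of `x`
  have hdist : ∀ i j : ℕ, i < j → j < d → x ^ q ^ i ≠ x ^ q ^ j := by
    intro i j hij hjd heq
    obtain ⟨e, he1, hed, hede⟩ : ∃ e, 0 < e ∧ e < d ∧ e = i + (d - j) := by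
      refine ⟨i + (d - j), ?_, ?_, rfl⟩ <;> clear_value d <;> omega
    have hxe : x ^ q ^ e = x := by
      have h1 : (x ^ q ^ i) ^ q ^ (d - j) = (x ^ q ^ j) ^ q ^ (d - j) := by rw [heq]
      rw [← pow_mul, ← pow_mul, ← pow_add, ← pow_add] at h1
      have h2 : j + (d - j) = d := by clear_value d; omega
      rw [h2] at h1
      rw [hede, h1, hall]
    have hpsi : ψ e = AlgHom.id F K := by
      apply AdjoinRoot.algHom_ext
      rw [AlgHom.id_apply, ← hxdef, hψ e x, hxe]
    have hally : ∀ y : K, y ^ q ^ e = y := by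
      intro y
      have := DFunLike.congr_fun hpsi y
      rwa [hψ e y, AlgHom.id_apply] at this
    have hP : ((X : K[X]) ^ q ^ e - X) = 0 := by
      apply Polynomial.eq_zero_of_natDegree_lt_card_of_eval_eq_zero _ (f := (id : K → K))
        Function.injective_id
      · intro y
        simp [hally y]
      · calc ((X : K[X]) ^ q ^ e - X).natDegree ≤ max ((X : K[X]) ^ q ^ e).natDegree (X : K[X]).natDegree :=
              natDegree_sub_le _ _
          _ ≤ q ^ e := by
              rw [natDegree_X_pow, natDegree_X]
              have : 1 ≤ q ^ e := Nat.one_le_pow _ _ (Nat.lt_of_lt_of_le Nat.zero_lt_one hq1.le)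
              omega
          _ < q ^ d := Nat.pow_lt_pow_right hq1 hed
          _ = Fintype.card K := cardK.symm
    have hcoeff := congrArg (fun P : K[X] => P.coeff (q ^ e)) hP
    have hqe1 : q ^ e ≠ 1 := (Nat.one_lt_pow he1.ne' hq1).ne'
    simp only [coeff_sub, coeff_X_pow, if_pos rfl, coeff_zero, coeff_X, if_neg (Ne.symm hqe1)] at hcoeff
    norm_num at hcoeff
  -- the multiset of orbit elements equals the roots of `Q` over `K`
  set Qm : K[X] := Q.map (algebraMap F K) with hQmdef
  have hQm0 : Qm ≠ 0 := by
    rw [hQmdef, Ne, Polynomial.map_eq_zero_iff hFK]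
    exact hQm.ne_zero
  set R : Multiset K := (Finset.range d).val.map (fun i => x ^ q ^ i) with hRdef
  have hnodup : R.Nodup := by
    refine Multiset.Nodup.map_on ?_ (Finset.range d).nodup
    intro i hi j hj hij
    simp only [Finset.mem_range, Finset.mem_val] at hi hj
    by_contra hne
    rcases lt_or_gt_of_ne hne with h | h
    · exact hdist i j h hj hij
    · exact hdist j i h hi hij.symm
  have hle : R ≤ Qm.roots := by
    rw [Multiset.le_iff_count]
    intro y
    by_cases hy : y ∈ R
    · have h1 : R.count y = 1 := Multiset.count_eq_one_of_mem hnodup hy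
      obtain ⟨i, hi, rfl⟩ := Multiset.mem_map.1 hy
      have h2 : 0 < Qm.roots.count (x ^ q ^ i) := by
        rw [Polynomial.count_roots]
        exact (Polynomial.rootMultiplicity_pos hQm0).2 (hroot i)
      omega
    · rw [Multiset.count_eq_zero_of_notMem hy]
      omega
  have hcardR : Multiset.card R = d := by
    rw [hRdef, Multiset.card_map]
    exact Finset.card_range d
  have hR : R = Qm.roots := by
    refine Multiset.eq_of_le_of_card_le hle ?_
    rw [hcardR]
    calc Multiset.card Qm.roots ≤ Qm.natDegree := Qm.card_roots'
      _ = d := by rw [hQmdef, natDegree_map]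
  -- Claim A : the constant term of `Q` in `K`
  have hQmsplit : C Qm.leadingCoeff * (Qm.roots.map (fun a => X - C a)).prod = Qm :=
    Polynomial.C_leadingCoeff_mul_prod_multiset_X_sub_C (by rw [← hR, hcardR, hQmdef, natDegree_map])
  have hlc : Qm.leadingCoeff = 1 := (hQm.map (algebraMap F K)).leadingCoeff
  set s : ℕ := ∑ i ∈ Finset.range d, q ^ i with hsdef
  have claimA : algebraMap F K (Q.eval 0) = (-1) ^ d * x ^ s := by
    have h1 : algebraMap F K (Q.eval 0) = Qm.eval 0 := by
      rw [hQmdef, Polynomial.eval_map, ← Polynomial.coeff_zero_eq_eval_zero,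
        Polynomial.eval₂_at_zero, Polynomial.coeff_zero_eq_eval_zero]
    rw [h1, ← hQmsplit, hlc, map_one, one_mul, Polynomial.eval_multiset_prod,
      Multiset.map_map, ← hR, hRdef, Multiset.map_map, ← Finset.prod_eq_multiset_prod]
    calc ∏ i ∈ Finset.range d, ((Polynomial.eval 0 ∘ fun a : K => X - C a) ∘ fun i : ℕ => x ^ q ^ i) i
        = ∏ i ∈ Finset.range d, (-1 : K) * x ^ q ^ i := by
          refine Finset.prod_congr rfl fun i _ => ?_
          simp [neg_one_mul]
      _ = (-1) ^ d * x ^ s := by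
          rw [Finset.prod_mul_distrib, Finset.prod_const, Finset.card_range,
            Finset.prod_pow_eq_pow_sum]
  -- characters and arithmetic
  have hqodd : Fintype.card F % 2 = 1 := Nat.odd_iff.1 hq
  have hF2 : ringChar F ≠ 2 := by
    intro h
    have h1 := FiniteField.even_card_of_char_two h
    omega
  have hK2 : ringChar K ≠ 2 := by
    intro h
    have h1 := FiniteField.even_card_of_char_two (F := K) h
    rw [cardK] at h1
    have h2 : q ^ d % 2 = 1 := Nat.odd_iff.1 (hq.pow)
    omega
  have hxne : x ≠ 0 := by
    intro hx0
    apply h0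
    have h1 : aeval x Q = 0 := by rw [hxdef, AdjoinRoot.aeval_eq, AdjoinRoot.mk_self]
    rw [hx0, Polynomial.aeval_def, Polynomial.eval₂_at_zero,
      Polynomial.coeff_zero_eq_eval_zero] at h1
    exact hFK (by rwa [map_zero])
  have hnx : (-x) ≠ 0 := neg_ne_zero.2 hxne
  obtain ⟨m, hm⟩ : ∃ m, q = m + 1 := ⟨q - 1, by omega⟩
  have hgeo : s * m + 1 = q ^ d := by
    have := geom_sum_nat m d
    rw [← hm] at this
    rw [hsdef]
    exact this
  have hparity : s % 2 = d % 2 := by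
    rw [hsdef]
    exact geom_sum_parity q d hq
  have hm2 : m = 2 * (q / 2) := by omega
  have hst : s * (q / 2) = q ^ d / 2 := by
    have h1 : 2 * (s * (q / 2)) + 1 = q ^ d := by
      rw [← hgeo, hm2]; ring
    omega
  have hpar2 : (d * (q / 2)) % 2 = (q ^ d / 2) % 2 := by
    rw [← hst]
    exact (Nat.ModEq.mul_right (q / 2) hparity).symm
  have claimB : algebraMap F K (Q.eval 0 ^ (q / 2)) = (-x) ^ (q ^ d / 2) := by
    rw [map_pow, claimA, mul_pow, ← pow_mul, ← pow_mul, neg_pow, hst,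
      neg_one_pow_parity hpar2, one_pow, mul_one, ← neg_pow]
  have hiff : IsSquare (-x) ↔ IsSquare (Q.eval 0) := by
    rw [FiniteField.isSquare_iff hK2 hnx, FiniteField.isSquare_iff hF2 h0, cardK, ← hqdef]
    constructor
    · intro h
      apply hFK
      rw [claimB, h, map_one]
    · intro h
      rw [← claimB, h, map_one]
  constructor
  · rintro ⟨u, hu⟩
    apply hiff.1
    have h1 : (AdjoinRoot.mk Q) (u ^ 2 + X) = 0 := AdjoinRoot.mk_eq_zero.2 hu
    rw [map_add, map_pow, AdjoinRoot.mk_X] at h1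
    exact ⟨AdjoinRoot.mk Q u, by linear_combination -h1⟩
  · intro hsq
    obtain ⟨c, hc⟩ := hiff.2 hsq
    obtain ⟨u, rfl⟩ := AdjoinRoot.mk_surjective c
    refine ⟨u, AdjoinRoot.mk_eq_zero.1 ?_⟩
    rw [map_add, map_pow, AdjoinRoot.mk_X]
    linear_combination -hc

lemma key_dvd {F : Type} [Field F] [Fintype F] [DecidableEq F] (hq : Odd (Fintype.card F))
    (Q : F[X]) (hQm : Q.Monic) (hirr : Irreducible Q)
    (hneg : quadraticChar F (Q.eval 0) = -1) {A B : F[X]}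
    (h : Q ∣ A ^ 2 + X * B ^ 2) : Q ∣ A ∧ Q ∣ B := by
  classical
  have hns : ¬IsSquare (Q.eval 0) := quadraticChar_neg_one_iff_not_isSquare.1 hneg
  have h0 : Q.eval 0 ≠ 0 := by
    intro hz
    exact hns (by rw [hz]; exact ⟨0, by simp⟩)
  have hnos : ¬∃ s : F[X], Q ∣ s ^ 2 + X :=
    fun hs => hns ((key_iff hq Q hQm hirr h0).1 hs)
  haveI : Fact (Irreducible Q) := ⟨hirr⟩
  have hB : Q ∣ B := by
    by_contra hB
    have h1 : (AdjoinRoot.mk Q A) ^ 2 + (AdjoinRoot.root Q) * (AdjoinRoot.mk Q B) ^ 2 = 0 := by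
      have h2 := AdjoinRoot.mk_eq_zero.2 h
      rw [map_add, map_mul, map_pow, map_pow, AdjoinRoot.mk_X] at h2
      exact h2
    have hBne : AdjoinRoot.mk Q B ≠ 0 := fun hz => hB (AdjoinRoot.mk_eq_zero.1 hz)
    obtain ⟨sp, hsp⟩ := AdjoinRoot.mk_surjective (AdjoinRoot.mk Q A / AdjoinRoot.mk Q B)
    apply hnos
    refine ⟨sp, AdjoinRoot.mk_eq_zero.1 ?_⟩
    rw [map_add, map_pow, AdjoinRoot.mk_X, hsp, div_pow,
      div_add' _ _ _ (pow_ne_zero 2 hBne)]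
    exact _root_.div_eq_zero_iff.2 (Or.inl (by linear_combination h1))
  obtain ⟨b1, hb1⟩ := hB
  have hA2 : Q ∣ A ^ 2 := by
    have hEq : A ^ 2 = (A ^ 2 + X * B ^ 2) - X * B ^ 2 := by ring
    rw [hEq]
    refine dvd_sub h ⟨X * (Q * b1 * b1), by rw [hb1]; ring⟩
  exact ⟨hirr.prime.dvd_of_dvd_pow hA2, ⟨b1, hb1⟩⟩

lemma even_aux {F : Type} [Field F] [Fintype F] [DecidableEq F] (hq : Odd (Fintype.card F))
    (Q : F[X]) (hQm : Q.Monic) (hirr : Irreducible Q)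
    (hneg : quadraticChar F (Q.eval 0) = -1) :
    ∀ k : ℕ, ∀ g A B : F[X], Q ^ k * g = A ^ 2 + X * B ^ 2 → ¬ Q ∣ g → Even k := by
  intro k
  induction k using Nat.strong_induction_on with
  | _ k ih =>
    intro g A B hEq hg
    rcases Nat.eq_zero_or_pos k with rfl | hk
    · exact ⟨0, rfl⟩
    have hdvd : Q ∣ A ^ 2 + X * B ^ 2 := by
      refine ⟨Q ^ (k - 1) * g, ?_⟩
      rw [← hEq, ← mul_assoc, ← pow_succ']
      congr 2
      omega
    obtain ⟨hA, hB⟩ := key_dvd hq Q hQm hirr hneg hdvd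
    obtain ⟨a, rfl⟩ := hA
    obtain ⟨b, rfl⟩ := hB
    have hQne : Q ≠ 0 := hQm.ne_zero
    rcases Nat.lt_or_ge k 2 with hk2 | hk2
    · -- k = 1 : contradiction
      have hk1 : k = 1 := by omega
      subst hk1
      exfalso
      apply hg
      have h2 : Q * g = Q * (Q * (a ^ 2 + X * b ^ 2)) := by
        linear_combination hEq
      exact ⟨a ^ 2 + X * b ^ 2, mul_left_cancel₀ hQne h2⟩
    · obtain ⟨k', rfl⟩ : ∃ k', k = k' + 2 := ⟨k - 2, by omega⟩
      have h2 : Q ^ 2 * (Q ^ k' * g) = Q ^ 2 * (a ^ 2 + X * b ^ 2) := by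
        linear_combination hEq
      have h3 := mul_left_cancel₀ (pow_ne_zero 2 hQne) h2
      obtain ⟨t, rfl⟩ := ih k' (by omega) g a b h3 hg
      exact ⟨t + 1, by ring⟩

lemma forward_dir {F : Type} [Field F] [Fintype F] [DecidableEq F] (hq : Odd (Fintype.card F))
    {f : F[X]} (hfne : f ≠ 0) {A B : F[X]} (hfeq : f = A ^ 2 + X * B ^ 2)
    (Q : F[X]) (hQm : Q.Monic) (hirr : Irreducible Q)
    (hneg : quadraticChar F (Q.eval 0) = -1) : Even (multiplicity Q f) := by
  have hfin : FiniteMultiplicity Q f :=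
    FiniteMultiplicity.of_not_isUnit hirr.not_isUnit hfne
  obtain ⟨g, hg1, hg2⟩ := hfin.exists_eq_pow_mul_and_not_dvd
  exact even_aux hq Q hQm hirr hneg (multiplicity Q f) g A B (by rw [← hg1, hfeq]) hg2

lemma descent {F : Type} [Field F] (Q : F[X]) (hQm : Q.Monic) (hirr : Irreducible Q) :
    ∀ N : ℕ, ∀ m A B : F[X], m.natDegree ≤ N → m ≠ 0 → m.natDegree < Q.natDegree →
      Q * m = A ^ 2 + X * B ^ 2 → ∃ A' B' : F[X], Q = A' ^ 2 + X * B' ^ 2 := by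
  intro N
  induction N using Nat.strong_induction_on with
  | _ N ih =>
    intro m A B hmN hm0 hmQ heq
    rcases Nat.eq_zero_or_pos m.natDegree with hdm0 | hdm1
    · -- base case : `m` is a nonzero constant
      obtain ⟨c, hc⟩ := Polynomial.natDegree_eq_zero.1 hdm0
      have hcne : c ≠ 0 := fun h => hm0 (by rw [← hc, h, map_zero])
      have hne : A ^ 2 + X * B ^ 2 ≠ 0 := by
        rw [← heq]; exact mul_ne_zero hQm.ne_zero hm0
      obtain ⟨e, he0, hlc⟩ := lc_sqX hne
      have hce : c = e ^ 2 := by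
        have h1 := congrArg leadingCoeff heq
        rw [← hc, leadingCoeff_mul, leadingCoeff_C, hQm.leadingCoeff, one_mul, hlc] at h1
        exact h1
      have hee : e⁻¹ ^ 2 * e ^ 2 = 1 := by field_simp
      refine ⟨C e⁻¹ * A, C e⁻¹ * B, ?_⟩
      calc Q = Q * C (e⁻¹ ^ 2 * e ^ 2) := by rw [hee, map_one, mul_one]
        _ = C (e⁻¹ ^ 2) * (Q * C (e ^ 2)) := by rw [map_mul]; ring
        _ = C (e⁻¹ ^ 2) * (Q * m) := by rw [← hce, hc]
        _ = C (e⁻¹ ^ 2) * (A ^ 2 + X * B ^ 2) := by rw [heq]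
        _ = (C e⁻¹ * A) ^ 2 + X * (C e⁻¹ * B) ^ 2 := by rw [map_pow]; ring
    · -- descent step
      have hlcne : m.leadingCoeff⁻¹ ≠ 0 := inv_ne_zero (leadingCoeff_ne_zero.2 hm0)
      have hmm : (m * C m.leadingCoeff⁻¹).Monic := monic_mul_leadingCoeff_inv hm0
      set mm := m * C m.leadingCoeff⁻¹ with hmmdef
      have hmdvd : m ∣ mm := ⟨C m.leadingCoeff⁻¹, rfl⟩
      have hdmm : mm.natDegree = m.natDegree := by
        rw [hmmdef, natDegree_mul hm0 (fun h => hlcne (C_eq_zero.1 h)), natDegree_C, add_zero]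
      set a := A %ₘ mm with hadef
      set b := B %ₘ mm with hbdef
      have hAa : m ∣ A - a := hmdvd.trans ⟨A /ₘ mm, by
        linear_combination (modByMonic_add_div A mm).symm⟩
      have hBb : m ∣ B - b := hmdvd.trans ⟨B /ₘ mm, by
        linear_combination (modByMonic_add_div B mm).symm⟩
      have hda : a.natDegree ≤ m.natDegree - 1 := by
        by_cases ha0 : a = 0
        · rw [ha0, natDegree_zero]; omega
        · have h1 := natDegree_lt_natDegree ha0 (degree_modByMonic_lt A hmm)
          rw [hdmm] at h1
          omega
      have hdb : b.natDegree ≤ m.natDegree - 1 := by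
        by_cases hb0 : b = 0
        · rw [hb0, natDegree_zero]; omega
        · have h1 := natDegree_lt_natDegree hb0 (degree_modByMonic_lt B hmm)
          rw [hdmm] at h1
          omega
      by_cases hab : a = 0 ∧ b = 0
      · -- then m divides Q : contradiction with irreducibility
        exfalso
        obtain ⟨A1, hA1⟩ : m ∣ A := by have := hAa; rwa [hab.1, sub_zero] at this
        obtain ⟨B1, hB1⟩ : m ∣ B := by have := hBb; rwa [hab.2, sub_zero] at this
        have h1 : Q * m = (m * (A1 ^ 2 + X * B1 ^ 2)) * m := by
          rw [heq, hA1, hB1]; ring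
        have h2 : Q = m * (A1 ^ 2 + X * B1 ^ 2) := mul_right_cancel₀ hm0 h1
        rcases hirr.isUnit_or_isUnit h2 with hu | hu
        · rw [Polynomial.natDegree_eq_zero_of_isUnit hu] at hdm1
          omega
        · have hcqne : A1 ^ 2 + X * B1 ^ 2 ≠ 0 := by
            intro hz
            rw [hz, mul_zero] at h2
            exact hQm.ne_zero h2
          have h3 : Q.natDegree = m.natDegree := by
            rw [h2, natDegree_mul hm0 hcqne, Polynomial.natDegree_eq_zero_of_isUnit hu,
              add_zero]
          omega
      · -- genuine descent
        have habne : a ^ 2 + X * b ^ 2 ≠ 0 := fun hz => hab (sqX_eq_zero hz)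
        have hmr : m ∣ a ^ 2 + X * b ^ 2 := by
          have h1 : a ^ 2 + X * b ^ 2
              = (A ^ 2 + X * B ^ 2) - ((A - a) * (A + a) + X * ((B - b) * (B + b))) := by
            ring
          rw [h1, ← heq]
          exact dvd_sub (dvd_mul_left m Q) (dvd_add (hAa.mul_right _) ((hBb.mul_right _).mul_left X))
        obtain ⟨r, hr⟩ := hmr
        have hrne : r ≠ 0 := by
          rintro rfl
          rw [mul_zero] at hr
          exact habne hr
        have hdr : r.natDegree ≤ m.natDegree - 1 := by
          have h1 : (a ^ 2 + X * b ^ 2).natDegree ≤ 2 * m.natDegree - 1 := by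
            refine le_trans (natDegree_add_le _ _) ?_
            have h2 : (a ^ 2).natDegree = 2 * a.natDegree := natDegree_pow a 2

            have h3 : (X * b ^ 2).natDegree ≤ 1 + 2 * b.natDegree := by
              refine le_trans (natDegree_mul_le) ?_
              rw [natDegree_X, natDegree_pow]
            omega
          have h4 : m.natDegree + r.natDegree = (a ^ 2 + X * b ^ 2).natDegree := by
            rw [hr, natDegree_mul hm0 hrne]
          omega
        obtain ⟨X1, hX1⟩ : m ∣ A * a + X * B * b := by
          have h1 : A * a + X * B * b
              = (A ^ 2 + X * B ^ 2) - (A * (A - a) + X * (B * (B - b))) := by ring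
          rw [h1, ← heq]
          exact dvd_sub (dvd_mul_left m Q) (dvd_add (hAa.mul_left _) ((hBb.mul_left _).mul_left X))
        obtain ⟨Y1, hY1⟩ : m ∣ A * b - B * a := by
          have h1 : A * b - B * a = B * (A - a) - A * (B - b) := by ring
          rw [h1]
          exact dvd_sub (hAa.mul_left _) (hBb.mul_left _)
        have hbig : m ^ 2 * (Q * r) = m ^ 2 * (X1 ^ 2 + X * Y1 ^ 2) := by
          calc m ^ 2 * (Q * r) = (Q * m) * (m * r) := by ring
            _ = (A ^ 2 + X * B ^ 2) * (a ^ 2 + X * b ^ 2) := by rw [heq, ← hr]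
            _ = (A * a + X * B * b) ^ 2 + X * (A * b - B * a) ^ 2 := by ring
            _ = (m * X1) ^ 2 + X * (m * Y1) ^ 2 := by rw [← hX1, ← hY1]
            _ = m ^ 2 * (X1 ^ 2 + X * Y1 ^ 2) := by ring
        have hQr : Q * r = X1 ^ 2 + X * Y1 ^ 2 :=
          mul_left_cancel₀ (pow_ne_zero 2 hm0) hbig
        exact ih r.natDegree (by omega) r X1 Y1 le_rfl hrne (by omega) hQr

lemma rep_good {F : Type} [Field F] [Fintype F] [DecidableEq F] (hq : Odd (Fintype.card F))
    (Q : F[X]) (hQm : Q.Monic) (hirr : Irreducible Q)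
    (hnneg : quadraticChar F (Q.eval 0) ≠ -1) : ∃ A B : F[X], Q = A ^ 2 + X * B ^ 2 := by
  by_cases h0 : Q.eval 0 = 0
  · -- then Q = X
    obtain ⟨u, hu⟩ : X ∣ Q := X_dvd_iff.2 (by rwa [coeff_zero_eq_eval_zero])
    have huu : IsUnit u := (hirr.isUnit_or_isUnit hu).resolve_left not_isUnit_X
    obtain ⟨c, hcu, rfl⟩ := Polynomial.isUnit_iff.1 huu
    have hc1 : (1 : F) = c := by
      have h1 := congrArg leadingCoeff hu
      rwa [hQm.leadingCoeff, leadingCoeff_mul, leadingCoeff_X, leadingCoeff_C, one_mul] at h1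
    refine ⟨0, 1, ?_⟩
    rw [hu, ← hc1, map_one, mul_one]
    ring
  · have hsq : IsSquare (Q.eval 0) := by
      by_contra h
      exact hnneg (quadraticChar_neg_one_iff_not_isSquare.2 h)
    obtain ⟨s0, hs0⟩ := (key_iff hq Q hQm hirr h0).2 hsq
    have hdQ : 0 < Q.natDegree := hirr.natDegree_pos
    set s := s0 %ₘ Q with hsdef
    have hss : Q ∣ s ^ 2 + X := by
      have h1 : Q ∣ s0 - s := ⟨s0 /ₘ Q, by linear_combination (modByMonic_add_div s0 Q).symm⟩
      have h2 : s ^ 2 + X = (s0 ^ 2 + X) - (s0 - s) * (s0 + s) := by ring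
      rw [h2]
      exact dvd_sub hs0 (h1.mul_right _)
    obtain ⟨m, hm⟩ := hss
    have hmne : m ≠ 0 := by
      rintro rfl
      rw [mul_zero] at hm
      have h1 : s ^ 2 + X * (1 : F[X]) ^ 2 = 0 := by rw [← hm]; ring
      have := (sqX_eq_zero h1).2
      simp at this
    have hds : s.natDegree ≤ Q.natDegree - 1 := by
      by_cases hs0' : s = 0
      · rw [hs0', natDegree_zero]; omega
      · have h1 := natDegree_lt_natDegree hs0' (degree_modByMonic_lt s0 hQm)
        omega
    have hdm : m.natDegree < Q.natDegree := by
      have h1 : (s ^ 2 + X).natDegree ≤ 2 * Q.natDegree - 1 := by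
        refine le_trans (natDegree_add_le _ _) ?_
        rw [natDegree_pow, natDegree_X]
        omega
      have h2 : Q.natDegree + m.natDegree = (s ^ 2 + X).natDegree := by
        rw [hm, natDegree_mul hQm.ne_zero hmne]
      omega
    exact descent Q hQm hirr m.natDegree m s 1 le_rfl hmne hdm (by rw [← hm]; ring)

lemma rep_mul {F : Type} [Field F] {f g : F[X]}
    (hf : ∃ A B : F[X], f = A ^ 2 + X * B ^ 2) (hg : ∃ A B : F[X], g = A ^ 2 + X * B ^ 2) :
    ∃ A B : F[X], f * g = A ^ 2 + X * B ^ 2 := by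
  obtain ⟨A, B, rfl⟩ := hf
  obtain ⟨a, b, rfl⟩ := hg
  exact ⟨A * a + X * B * b, A * b - B * a, brahmagupta A B a b⟩

lemma rep_pow {F : Type} [Field F] {f : F[X]} (hf : ∃ A B : F[X], f = A ^ 2 + X * B ^ 2)
    (k : ℕ) : ∃ A B : F[X], f ^ k = A ^ 2 + X * B ^ 2 := by
  induction k with
  | zero => exact ⟨1, 0, by ring⟩
  | succ k ih => exact (pow_succ f k) ▸ rep_mul ih hf

open UniqueFactorizationMonoid in
/-- Fermat-type theorem for `F_q[T]` (`q` odd): a monic `f` of degree `n` is of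
the form `A² + T·B²` iff every monic irreducible `Q` with `χ_q(Q(0)) = -1`
divides `f` with even multiplicity. -/
theorem sum_of_squares_iff_even_multiplicity (F : Type) [Field F] [Fintype F] [DecidableEq F]
    (hq : Odd (Fintype.card F)) (f : F[X]) (n : ℕ) (hf : f.Monic) (hdeg : f.natDegree = n) :
    (∃ A B : F[X], f = A ^ 2 + X * B ^ 2) ↔
      ∀ Q : F[X], Q.Monic → Irreducible Q → quadraticChar F (Q.eval 0) = -1 →
        Even (multiplicity Q f) := by
  classical
  constructor
  · rintro ⟨A, B, hfeq⟩ Q hQmo hQirr hneg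
    exact forward_dir hq hf.ne_zero hfeq Q hQmo hQirr hneg
  · intro hmult
    have hfne : f ≠ 0 := hf.ne_zero
    have hmonicfac : ∀ Q ∈ normalizedFactors f, Q.Monic := by
      intro Q hQ
      have h1 := normalize_normalized_factor Q hQ
      have h2 : Q ≠ 0 := (irreducible_of_normalized_factor Q hQ).ne_zero
      have h3 := Polynomial.monic_normalize h2
      rwa [h1] at h3
    have hprod : (normalizedFactors f).prod = f := by
      refine Polynomial.eq_of_monic_of_associated ?_ hf (prod_normalizedFactors hfne)
      have h1 := monic_multiset_prod_of_monic (normalizedFactors f) _root_.id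
        (fun Q hQ => hmonicfac Q hQ)
      rwa [Multiset.map_id] at h1
    suffices hrep : ∃ A B : F[X],
        (∏ Q ∈ (normalizedFactors f).toFinset, Q ^ ((normalizedFactors f).count Q))
          = A ^ 2 + X * B ^ 2 by
      rwa [← Finset.prod_multiset_count, hprod] at hrep
    refine Finset.prod_induction _ (fun g => ∃ A B : F[X], g = A ^ 2 + X * B ^ 2)
      (fun u v hu hv => rep_mul hu hv) ⟨1, 0, by ring⟩ ?_
    intro Q hQ
    have hQmem := Multiset.mem_toFinset.1 hQ
    have hQirr := irreducible_of_normalized_factor Q hQmem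
    have hQmo := hmonicfac Q hQmem
    by_cases hneg : quadraticChar F (Q.eval 0) = -1
    · have heven : Even (multiplicity Q f) := hmult Q hQmo hQirr hneg
      have hfin : FiniteMultiplicity Q f :=
        FiniteMultiplicity.of_not_isUnit hQirr.not_isUnit hfne
      have hcount : (normalizedFactors f).count Q = multiplicity Q f := by
        have h1 := emultiplicity_eq_count_normalizedFactors hQirr hfne
        rw [hfin.emultiplicity_eq_multiplicity, normalize_normalized_factor Q hQmem] at h1
        exact_mod_cast h1.symm
      rw [hcount]
      obtain ⟨j, hj⟩ := heven
      exact ⟨Q ^ j, 0, by rw [hj]; ring⟩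
    · exact rep_pow (rep_good hq Q hQmo hQirr hneg) _
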